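/- The axiom scheme ⟨n⟩φ → φ (for all φ with sort(φ) ≤ n and all n) is valid in a J*-model A if and only if A is strongly persistent. -/

import Mathlib

open scoped Classical

/-- Many-sorted polymodal formulas: variables carry an index and a sort `α ≤ ω`
(elements of `ℕ∞ = ℕ ∪ {ω}`). -/
inductive Formula where
  | var : ℕ → ℕ∞ → Formula
  | top : Formula
  | bot : Formula
  | and : Formula → Formula → Formula
  | or : Formula → Formula → Formula
  | neg : Formula → Formula
  | dia : ℕ → Formula → Formula
  deriving DecidableEq

namespace Formula

def imp (φ ψ : Formula) : Formula := .or (.neg φ) ψ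

def box (n : ℕ) (φ : Formula) : Formula := .neg (.dia n (.neg φ))

/-- The sort of a formula. -/
noncomputable def sort : Formula → ℕ∞
  | var _ α => α
  | top => 0
  | bot => 0
  | and φ ψ => max φ.sort ψ.sort
  | or φ ψ => max φ.sort ψ.sort
  | neg φ => φ.sort + 1
  | dia n _ => (n : ℕ∞)

def size : Formula → ℕ
  | var _ _ => 1
  | top => 1
  | bot => 1
  | and φ ψ => φ.size + ψ.size + 1
  | or φ ψ => φ.size + ψ.size + 1
  | neg φ => φ.size + 1
  | dia _ φ => φ.size + 1

def subformulas : Formula → Finset Formula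
  | var i α => {var i α}
  | top => {top}
  | bot => {bot}
  | and φ ψ => insert (and φ ψ) (φ.subformulas ∪ ψ.subformulas)
  | or φ ψ => insert (or φ ψ) (φ.subformulas ∪ ψ.subformulas)
  | neg φ => insert (neg φ) φ.subformulas
  | dia n φ => insert (dia n φ) φ.subformulas

/-- Modified negation. -/
def mneg : Formula → Formula
  | neg ψ => ψ
  | φ => neg φ

end Formula

/-- A boolean valuation treating variables and diamond formulas as atoms. -/
def IsPropValuation (v : Formula → Bool) : Prop :=
  v .top = true ∧ v .bot = false ∧
  (∀ φ ψ, v (.and φ ψ) = (v φ && v ψ)) ∧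
  (∀ φ ψ, v (.or φ ψ) = (v φ || v ψ)) ∧
  (∀ φ, v (.neg φ) = !(v φ))

/-- Classical propositional tautologies in the polymodal language. -/
def Tautology (φ : Formula) : Prop := ∀ v, IsPropValuation v → v φ = true

/-- The many-sorted logic GLP*. -/
inductive GLPStar : Formula → Prop
  | taut {φ} : Tautology φ → GLPStar φ
  | dist (n : ℕ) (φ ψ) :
      GLPStar ((Formula.dia n (φ.or ψ)).imp ((Formula.dia n φ).or (Formula.dia n ψ)))
  | boxTop (n : ℕ) : GLPStar (Formula.box n .top)
  | loeb (n : ℕ) (φ) :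
      GLPStar ((Formula.dia n φ).imp (Formula.dia n (φ.and (Formula.dia n φ.neg))))
  | mono {m n : ℕ} (φ) : m < n → GLPStar ((Formula.dia n φ).imp (Formula.dia m φ))
  | sigmaComplete {n : ℕ} {φ} : φ.sort ≤ (n : ℕ∞) → GLPStar ((Formula.dia n φ).imp φ)
  | mp {φ ψ} : GLPStar (φ.imp ψ) → GLPStar φ → GLPStar ψ
  | diaRule {φ ψ} (n : ℕ) : GLPStar (φ.imp ψ) →
      GLPStar ((Formula.dia n φ).imp (Formula.dia n ψ))

/-- The many-sorted logic J*. -/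
inductive JStar : Formula → Prop
  | taut {φ} : Tautology φ → JStar φ
  | dist (n : ℕ) (φ ψ) :
      JStar ((Formula.dia n (φ.or ψ)).imp ((Formula.dia n φ).or (Formula.dia n ψ)))
  | boxTop (n : ℕ) : JStar (Formula.box n .top)
  | loeb (n : ℕ) (φ) :
      JStar ((Formula.dia n φ).imp (Formula.dia n (φ.and (Formula.dia n φ.neg))))
  | trans {m n : ℕ} (φ) : m < n →
      JStar ((Formula.dia m (Formula.dia n φ)).imp (Formula.dia m φ))
  | sigmaComplete {n : ℕ} {φ} : φ.sort ≤ (n : ℕ∞) → JStar ((Formula.dia n φ).imp φ)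
  | mp {φ ψ} : JStar (φ.imp ψ) → JStar φ → JStar ψ
  | diaRule {φ ψ} (n : ℕ) : JStar (φ.imp ψ) →
      JStar ((Formula.dia n φ).imp (Formula.dia n ψ))

/-- Japaridze's (one-sorted) logic GLP, read over the sorted language
with sorts disregarded. -/
inductive GLP : Formula → Prop
  | taut {φ} : Tautology φ → GLP φ
  | dist (n : ℕ) (φ ψ) :
      GLP ((Formula.dia n (φ.or ψ)).imp ((Formula.dia n φ).or (Formula.dia n ψ)))
  | boxTop (n : ℕ) : GLP (Formula.box n .top)
  | loeb (n : ℕ) (φ) :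
      GLP ((Formula.dia n φ).imp (Formula.dia n (φ.and (Formula.dia n φ.neg))))
  | persist {m n : ℕ} (φ) : m < n →
      GLP ((Formula.dia m φ).imp (Formula.box n (Formula.dia m φ)))
  | mono {m n : ℕ} (φ) : m < n → GLP ((Formula.dia n φ).imp (Formula.dia m φ))
  | mp {φ ψ} : GLP (φ.imp ψ) → GLP φ → GLP ψ
  | diaRule {φ ψ} (n : ℕ) : GLP (φ.imp ψ) → GLP ((Formula.dia n φ).imp (Formula.dia n ψ))

/-- Kripke models for the many-sorted polymodal language. -/
structure KripkeModel where
  W : Type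
  R : ℕ → W → W → Prop
  val : ℕ → ℕ∞ → Set W

def KripkeModel.Sat (M : KripkeModel) : M.W → Formula → Prop
  | x, .var i α => x ∈ M.val i α
  | _, .top => True
  | _, .bot => False
  | x, .and φ ψ => M.Sat x φ ∧ M.Sat x ψ
  | x, .or φ ψ => M.Sat x φ ∨ M.Sat x ψ
  | x, .neg φ => ¬ M.Sat x φ
  | x, .dia n φ => ∃ y, M.R n x y ∧ M.Sat y φ

/-- No infinite ascending chain `x₀ R x₁ R x₂ …`. -/
def ConverselyWellFounded {α : Type*} (R : α → α → Prop) : Prop :=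
  ¬ ∃ f : ℕ → α, ∀ i, R (f i) (f (i + 1))

def IsJFrame (M : KripkeModel) : Prop :=
  (∀ k, Transitive (M.R k) ∧ ConverselyWellFounded (M.R k)) ∧
  (∀ m n : ℕ, m < n → ∀ x y, M.R n x y → ∀ z, (M.R m x z ↔ M.R m y z)) ∧
  (∀ m n : ℕ, m < n → ∀ x y z, M.R m x y → M.R n y z → M.R m x z)

def StronglyPersistent (M : KripkeModel) : Prop :=
  (∀ (i : ℕ) (α : ℕ∞) (n : ℕ) (x y : M.W),
      α ≤ (n : ℕ∞) → M.R n x y → y ∈ M.val i α → x ∈ M.val i α) ∧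
  (∀ (i : ℕ) (α : ℕ∞) (n : ℕ) (x y : M.W),
      α < (n : ℕ∞) → M.R n x y → y ∉ M.val i α → x ∉ M.val i α)

/-- Finite model: finitely many worlds and `R k = ∅` for almost all `k`. -/
def IsFiniteModel (M : KripkeModel) : Prop :=
  Finite M.W ∧ ∃ K : ℕ, ∀ k, K ≤ k → ∀ x y, ¬ M.R k x y

def IsRoot (M : KripkeModel) (r : M.W) : Prop :=
  ∀ x : M.W, r = x ∨ ∃ k, M.R k r x

/-- `ℓ(Δ)`. -/
def ell (Δ : Set Formula) : Set ℕ := {n | ∃ φ, Formula.dia n φ ∈ Δ}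

def Adequate (Δ : Set Formula) : Prop :=
  Formula.top ∈ Δ ∧
  (∀ φ ∈ Δ, ∀ ψ ∈ φ.subformulas, ψ ∈ Δ) ∧
  (∀ φ ∈ Δ, φ.mneg ∈ Δ) ∧
  (∀ (n m : ℕ) (φ ψ : Formula),
      Formula.dia n φ ∈ Δ → Formula.dia m ψ ∈ Δ → Formula.dia m φ ∈ Δ) ∧
  (∀ (i m n : ℕ), Formula.var i (m : ℕ∞) ∈ Δ → n ∈ ell Δ → m ≤ n →
      Formula.dia n (Formula.var i (m : ℕ∞)) ∈ Δ) ∧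
  (∀ (i m n : ℕ), Formula.neg (Formula.var i (m : ℕ∞)) ∈ Δ → n ∈ ell Δ → m < n →
      Formula.dia n (Formula.neg (Formula.var i (m : ℕ∞))) ∈ Δ)

def listConj : List Formula → Formula := List.foldr Formula.and Formula.top

/-- The list of all subformulas of the form `⟨n⟩ψ` (as pairs `(n, ψ)`). -/
def diaSubsList : Formula → List (ℕ × Formula)
  | .and φ ψ => diaSubsList φ ++ diaSubsList ψ
  | .or φ ψ => diaSubsList φ ++ diaSubsList ψ
  | .neg φ => diaSubsList φ
  | .dia n φ => (n, φ) :: diaSubsList φ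
  | _ => []

/-- `n = max_i m_i`, the largest modality occurring in `φ`. -/
def maxMod (φ : Formula) : ℕ := ((diaSubsList φ).map Prod.fst).foldr max 0

/-- `M(φ)`. -/
def Mformula (φ : Formula) : Formula :=
  listConj ((diaSubsList φ).map (fun p =>
    listConj (((List.range (maxMod φ + 1)).filter (fun j => decide (p.1 < j))).map
      (fun j => (Formula.dia j p.2).imp (Formula.dia p.1 p.2)))))

/-- `M⁺(φ) = M(φ) ∧ ⋀_{i ≤ n} [i]M(φ)`. -/
def Mplus (φ : Formula) : Formula :=
  (Mformula φ).and
    (listConj ((List.range (maxMod φ + 1)).map (fun i => Formula.box i (Mformula φ))))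

/-- The diamond subformulas sorted so that the modalities are nondecreasing. -/
def sortedDiaSubs (φ : Formula) : List (ℕ × Formula) :=
  (diaSubsList φ).mergeSort (fun a b => Nat.ble a.1 b.1)

def Npairs : List (ℕ × Formula) → List Formula
  | [] => []
  | p :: rest =>
      rest.map (fun q => (Formula.dia q.1 q.2).imp (Formula.dia p.1 p.2)) ++ Npairs rest

/-- `N(φ)`. -/
def Nformula (φ : Formula) : Formula := listConj (Npairs (sortedDiaSubs φ))

/-- `N⁺(φ) = N(φ) ∧ ⋀_{1≤i≤s} [m_i]N(φ)`. -/
def Nplus (φ : Formula) : Formula :=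
  (Nformula φ).and
    (listConj ((sortedDiaSubs φ).map (fun p => Formula.box p.1 (Nformula φ))))

/-- The list of modalities occurring in `φ`. -/
def modList (φ : Formula) : List ℕ := ((diaSubsList φ).map Prod.fst).dedup

def varsList : Formula → List (ℕ × ℕ∞)
  | .var i α => [(i, α)]
  | .and φ ψ => varsList φ ++ varsList ψ
  | .or φ ψ => varsList φ ++ varsList ψ
  | .neg φ => varsList φ
  | .dia _ φ => varsList φ
  | _ => []

/-- The set of (sorted) propositional variables occurring in `φ`. -/
def varsOf (φ : Formula) : Finset (ℕ × ℕ∞) := (varsList φ).toFinset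

/-- `R_Θ(φ)` with `Θ` the set of modalities of `φ`. -/
def Rtheta (φ : Formula) : Formula :=
  listConj ((varsList φ).map (fun v =>
    Formula.and
      (listConj (((modList φ).filter (fun (j : ℕ) => decide (v.2 ≤ (j : ℕ∞)))).map
        (fun j => (Formula.dia j (Formula.var v.1 v.2)).imp (Formula.var v.1 v.2))))
      (listConj (((modList φ).filter (fun (j : ℕ) => decide (v.2 < (j : ℕ∞)))).map
        (fun j => (Formula.dia j (Formula.neg (Formula.var v.1 v.2))).imp
          (Formula.neg (Formula.var v.1 v.2)))))))

/-- `R⁺_Θ(φ) = R_Θ(φ) ∧ ⋀_{j ∈ Θ} [j]R_Θ(φ)`. -/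
def Rplus (φ : Formula) : Formula :=
  (Rtheta φ).and (listConj ((modList φ).map (fun j => Formula.box j (Rtheta φ))))

/-- Reassign sort `ω` to every propositional variable. -/
def toOmega : Formula → Formula
  | .var i _ => .var i ⊤
  | .top => .top
  | .bot => .bot
  | .and φ ψ => .and (toOmega φ) (toOmega ψ)
  | .or φ ψ => .or (toOmega φ) (toOmega ψ)
  | .neg φ => .neg (toOmega φ)
  | .dia n φ => .dia n (toOmega φ)

/-- `H(φ) = ⋀_i (φ_i → ⟨n_i⟩φ_i)`. -/
def Hformula (φ : Formula) : Formula :=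
  listConj ((diaSubsList φ).map (fun p => Formula.imp p.2 (Formula.dia p.1 p.2)))

/-- The truth provability logic GLPS*. -/
inductive GLPSStar : Formula → Prop
  | glp {φ} : GLPStar φ → GLPSStar φ
  | refl (n : ℕ) (φ : Formula) : GLPSStar (φ.imp (Formula.dia n φ))
  | mp {φ ψ} : GLPSStar (φ.imp ψ) → GLPSStar φ → GLPSStar ψ

lemma persist_aux (M : KripkeModel) (hJ : IsJFrame M) (hSP : StronglyPersistent M)
    (φ : Formula) : ∀ (n : ℕ) (x y : M.W), M.R n x y →
      ((φ.sort ≤ (n : ℕ∞) → M.Sat y φ → M.Sat x φ) ∧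
       (φ.sort < (n : ℕ∞) → M.Sat x φ → M.Sat y φ)) := by
  induction φ with
  | var i α =>
    intro n x y hR
    exact ⟨fun hle hy => hSP.1 i α n x y hle hR hy,
      fun hlt hx => by
        by_contra hy
        exact hSP.2 i α n x y hlt hR hy hx⟩
  | top => intro n x y hR; exact ⟨fun _ _ => trivial, fun _ _ => trivial⟩
  | bot => intro n x y hR; exact ⟨fun _ h => h, fun _ h => h⟩
  | and φ ψ ihφ ihψ =>
    intro n x y hR
    simp only [Formula.sort, max_le_iff, max_lt_iff, KripkeModel.Sat]
    exact ⟨fun h hy => ⟨(ihφ n x y hR).1 h.1 hy.1, (ihψ n x y hR).1 h.2 hy.2⟩,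
      fun h hx => ⟨(ihφ n x y hR).2 h.1 hx.1, (ihψ n x y hR).2 h.2 hx.2⟩⟩
  | or φ ψ ihφ ihψ =>
    intro n x y hR
    simp only [Formula.sort, max_le_iff, max_lt_iff, KripkeModel.Sat]
    exact ⟨fun h hy => hy.imp ((ihφ n x y hR).1 h.1) ((ihψ n x y hR).1 h.2),
      fun h hx => hx.imp ((ihφ n x y hR).2 h.1) ((ihψ n x y hR).2 h.2)⟩
  | neg φ ih =>
    intro n x y hR
    simp only [Formula.sort, KripkeModel.Sat]
    constructor
    · intro h hy hx
      have hne : φ.sort ≠ ⊤ := by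
        intro ht; rw [ht] at h; simp at h
      have hlt : φ.sort < (n : ℕ∞) := (ENat.add_one_le_iff hne).mp h
      exact hy ((ih n x y hR).2 hlt hx)
    · intro h hx hy
      have hle : φ.sort ≤ (n : ℕ∞) := le_of_lt (lt_of_le_of_lt le_self_add h)
      exact hx ((ih n x y hR).1 hle hy)
  | dia m φ ih =>
    intro n x y hR
    simp only [Formula.sort, Nat.cast_le, Nat.cast_lt, KripkeModel.Sat]
    constructor
    · rintro hmn ⟨z, hyz, hz⟩
      rcases lt_or_eq_of_le hmn with hlt | rfl
      · exact ⟨z, ((hJ.2.1 m n hlt x y hR z).2 hyz), hz⟩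
      · exact ⟨z, (hJ.1 m).1 hR hyz, hz⟩
    · rintro hlt ⟨z, hxz, hz⟩
      exact ⟨z, ((hJ.2.1 m n hlt x y hR z).1 hxz), hz⟩

/-- the scheme ⟨n⟩φ → φ (for sort φ ≤ n) is valid in a J*-model
iff the model is strongly persistent. -/
theorem sigmaComplete_valid_iff_stronglyPersistent (M : KripkeModel) (hJ : IsJFrame M) :
    (∀ (n : ℕ) (φ : Formula), φ.sort ≤ (n : ℕ∞) →
        ∀ x : M.W, M.Sat x ((Formula.dia n φ).imp φ)) ↔
      StronglyPersistent M := by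
  constructor
  · intro hval
    constructor
    · intro i α n x y hle hR hy
      have h := hval n (Formula.var i α) hle x
      simp only [Formula.imp, KripkeModel.Sat] at h
      rcases h with h | h
      · exact absurd ⟨y, hR, hy⟩ h
      · exact h
    · intro i α n x y hlt hR hy
      have hne : α ≠ ⊤ := fun ht => by rw [ht] at hlt; exact absurd hlt (by simp)
      have hle : (Formula.neg (Formula.var i α)).sort ≤ (n : ℕ∞) := by
        simpa [Formula.sort] using (ENat.add_one_le_iff hne).mpr hlt
      have h := hval n (Formula.neg (Formula.var i α)) hle x
      simp only [Formula.imp, KripkeModel.Sat] at h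
      rcases h with h | h
      · exact absurd ⟨y, hR, hy⟩ h
      · exact h
  · intro hSP n φ hle x
    simp only [Formula.imp, KripkeModel.Sat]
    by_cases h : ∃ y, M.R n x y ∧ M.Sat y φ
    · rcases h with ⟨y, hR, hy⟩
      exact Or.inr ((persist_aux M hJ hSP φ n x y hR).1 hle hy)
    · exact Or.inl h
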